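/- Let f : D² → ℂ be a continuous map on the closed unit disc, holomorphic on the interior, such that f maps the boundary circle ∂D² into the unit circle S¹. Then f is a finite Blaschke product: there exist θ ∈ ℝ, m ∈ ℕ, and points α_1, ..., α_m in the open unit disc such that f(z) = e^{iθ} ∏_{j=1}^{m} (z - α_j)/(1 - conj(α_j) z) for all z in the closed disc. -/

import Mathlib

open Metric Complex Set Filter


open scoped Classical in
noncomputable def ordN (f : ℂ → ℂ) (z : ℂ) : ℕ :=
  if h : AnalyticAt ℂ f z then (analyticOrderAt f z).toNat else 0

lemma not_eqOn_zero (f : ℂ → ℂ)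
    (hc : ContinuousOn f (closedBall (0 : ℂ) 1))
    (hb : ∀ z ∈ sphere (0:ℂ) 1, f z ≠ 0) :
    ¬ EqOn f 0 (ball (0:ℂ) 1) := by
  intro h
  have h1 : (1:ℂ) ∈ sphere (0:ℂ) 1 := by simp
  have hcl : EqOn f 0 (closedBall (0:ℂ) 1) := by
    apply h.of_subset_closure hc continuousOn_const ball_subset_closedBall
    rw [closure_ball (0:ℂ) one_ne_zero]
  exact hb 1 h1 (hcl (by simp))

lemma not_eventually_zero (f : ℂ → ℂ)
    (hc : ContinuousOn f (closedBall (0 : ℂ) 1))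
    (hd : DifferentiableOn ℂ f (ball (0 : ℂ) 1))
    (hb : ∀ z ∈ sphere (0:ℂ) 1, f z ≠ 0) {z : ℂ} (hz : z ∈ ball (0:ℂ) 1) :
    ¬ ∀ᶠ w in nhds z, f w = 0 := by
  intro h
  have hA : AnalyticOnNhd ℂ f (ball (0:ℂ) 1) := hd.analyticOnNhd isOpen_ball
  exact not_eqOn_zero f hc hb
    (hA.eqOn_zero_of_preconnected_of_eventuallyEq_zero
      (convex_ball (0:ℂ) 1).isPreconnected hz h)

lemma zeros_finite (f : ℂ → ℂ)
    (hc : ContinuousOn f (closedBall (0 : ℂ) 1))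
    (hd : DifferentiableOn ℂ f (ball (0 : ℂ) 1))
    (hb : ∀ z ∈ sphere (0:ℂ) 1, f z ≠ 0) :
    {z ∈ closedBall (0:ℂ) 1 | f z = 0}.Finite := by
  set Z := {z ∈ closedBall (0:ℂ) 1 | f z = 0} with hZ
  by_contra h
  have hinf : Z.Infinite := h
  obtain ⟨x, hxK, hx⟩ := hinf.exists_accPt_of_subset_isCompact
    (isCompact_closedBall (0:ℂ) 1) (sep_subset _ _)
  have hfreq : ∃ᶠ w in nhds x, w ≠ x ∧ w ∈ Z := accPt_iff_frequently.mp hx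
  have hZc : IsClosed Z := by
    have : Z = closedBall (0:ℂ) 1 ∩ f ⁻¹' {0} := by ext w; simp [hZ]
    rw [this]
    exact hc.preimage_isClosed_of_isClosed (isCompact_closedBall (0:ℂ) 1).isClosed isClosed_singleton
  have hxZ : x ∈ Z := by
    have : x ∈ closure Z := mem_closure_iff_frequently.mpr
      (hfreq.mono fun w hw => hw.2)
    rwa [hZc.closure_eq] at this
  rcases lt_or_eq_of_le (mem_closedBall_zero_iff.mp hxZ.1) with hlt | heq
  · have hA : AnalyticOnNhd ℂ f (ball (0:ℂ) 1) := hd.analyticOnNhd isOpen_ball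
    exact not_eqOn_zero f hc hb
      (hA.eqOn_zero_of_preconnected_of_frequently_eq_zero
        (convex_ball (0:ℂ) 1).isPreconnected (mem_ball_zero_iff.mpr hlt)
        (frequently_nhdsWithin_iff.mpr
          (hfreq.mono fun w hw => ⟨hw.2.2, hw.1⟩)))
  · exact hb x (by simpa [mem_sphere_zero_iff_norm] using heq) hxZ.2

lemma ordN_mul_sub {g : ℂ → ℂ} {α z : ℂ} (hg : AnalyticAt ℂ g z) (htop : analyticOrderAt g z ≠ ⊤) :
    ordN (fun w => (w - α) * g w) z = ordN g z + (if z = α then 1 else 0) := by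
  obtain ⟨n, hn⟩ : ∃ n : ℕ, analyticOrderAt g z = (n : ℕ∞) :=
    ⟨(analyticOrderAt g z).toNat, (ENat.coe_toNat htop).symm⟩
  obtain ⟨h, hh, hh0, hhe⟩ := (hg.analyticOrderAt_eq_natCast (n := n)).mp hn
  have hid : AnalyticAt ℂ (fun w : ℂ => w - α) z := by
    exact analyticAt_id.sub analyticAt_const
  have hF : AnalyticAt ℂ (fun w => (w - α) * g w) z := hid.mul hg
  by_cases hzα : z = α
  · subst hzα
    have hFo : analyticOrderAt (fun w => (w - z) * g w) z = ((n + 1 : ℕ) : ℕ∞) := by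
      rw [hF.analyticOrderAt_eq_natCast]
      refine ⟨h, hh, hh0, ?_⟩
      filter_upwards [hhe] with w hw
      rw [hw]; simp only [smul_eq_mul, pow_succ]; ring
    simp only [ordN, dif_pos hF, dif_pos hg, hFo, hn, ENat.toNat_coe]
    simp
  · have hFo : analyticOrderAt (fun w => (w - α) * g w) z = (n : ℕ∞) := by
      rw [hF.analyticOrderAt_eq_natCast]
      refine ⟨fun w => (w - α) * h w, hid.mul hh,
        mul_ne_zero (sub_ne_zero.mpr hzα) hh0, ?_⟩
      filter_upwards [hhe] with w hw
      rw [hw]; simp only [smul_eq_mul]; ring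
    simp only [ordN, dif_pos hF, dif_pos hg, hFo, hn, ENat.toNat_coe, if_neg hzα]
    simp

lemma one_le_ordN {f : ℂ → ℂ} {α : ℂ} (hf : AnalyticAt ℂ f α) (htop : analyticOrderAt f α ≠ ⊤)
    (h0 : f α = 0) : 1 ≤ ordN f α := by
  obtain ⟨n, hn⟩ : ∃ n : ℕ, analyticOrderAt f α = (n : ℕ∞) :=
    ⟨(analyticOrderAt f α).toNat, (ENat.coe_toNat htop).symm⟩
  obtain ⟨h, hh, hh0, hhe⟩ := (hf.analyticOrderAt_eq_natCast (n := n)).mp hn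
  rcases Nat.eq_zero_or_pos n with hn0 | hn1
  · exfalso
    apply hh0
    have := hhe.self_of_nhds
    rw [hn0] at this
    simpa [h0] using this.symm
  · simp only [ordN, dif_pos hf, hn, ENat.toNat_coe]
    omega

lemma dslope_analyticOnNhd (f : ℂ → ℂ) (hd : DifferentiableOn ℂ f (ball (0:ℂ) 1))
    {α : ℂ} (hα : α ∈ ball (0:ℂ) 1) :
    AnalyticOnNhd ℂ (dslope f α) (ball (0:ℂ) 1) := by
  have hA : AnalyticOnNhd ℂ f (ball (0:ℂ) 1) := hd.analyticOnNhd isOpen_ball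
  intro z hz
  by_cases hzα : z = α
  · subst hzα
    obtain ⟨p, hp⟩ := hA z hz
    exact ⟨_, hp.has_fpower_series_dslope_fslope⟩
  · have h1 : AnalyticAt ℂ (fun w => (w - α)⁻¹ • (f w - f α)) z := by
      exact ((analyticAt_id.sub analyticAt_const).inv
        (sub_ne_zero.mpr hzα)).smul ((hA z hz).sub analyticAt_const)
    exact h1.congr (dslope_eventuallyEq_slope_of_ne f hzα).symm

lemma dslope_continuousOn (f : ℂ → ℂ)
    (hc : ContinuousOn f (closedBall (0 : ℂ) 1))
    (hd : DifferentiableOn ℂ f (ball (0 : ℂ) 1))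
    {α : ℂ} (hα : α ∈ ball (0:ℂ) 1) :
    ContinuousOn (dslope f α) (closedBall (0:ℂ) 1) := by
  intro x hx
  by_cases hxb : x ∈ ball (0:ℂ) 1
  · exact ((dslope_analyticOnNhd f hd hα x hxb).differentiableAt.continuousAt).continuousWithinAt
  · have hxα : x ≠ α := fun h => hxb (h ▸ hα)
    have h1 : ContinuousWithinAt (slope f α) (closedBall (0:ℂ) 1) x := by
      exact ((continuousWithinAt_id.sub continuousWithinAt_const).inv₀
        (sub_ne_zero.mpr hxα)).smul ((hc x hx).sub continuousWithinAt_const)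
    exact h1.congr_of_eventuallyEq
      ((dslope_eventuallyEq_slope_of_ne f hxα).filter_mono nhdsWithin_le_nhds)
      (dslope_of_ne f hxα)

lemma const_of_ne_zero (f : ℂ → ℂ)
    (hc : ContinuousOn f (closedBall (0 : ℂ) 1))
    (hd : DifferentiableOn ℂ f (ball (0 : ℂ) 1))
    (hb : ∀ z : ℂ, ‖z‖ = 1 → ‖f z‖ = 1)
    (h0 : ∀ z ∈ closedBall (0:ℂ) 1, f z ≠ 0) :
    ∃ θ : ℝ, ∀ z ∈ closedBall (0:ℂ) 1, f z = Complex.exp (θ * I) := by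
  have hcl : closure (ball (0:ℂ) 1) = closedBall (0:ℂ) 1 := closure_ball (0:ℂ) one_ne_zero
  have hfr : frontier (ball (0:ℂ) 1) = sphere (0:ℂ) 1 := frontier_ball (0:ℂ) one_ne_zero
  have hdc : DiffContOnCl ℂ f (ball (0:ℂ) 1) := ⟨hd, by rwa [hcl]⟩
  have hle : ∀ z ∈ closedBall (0:ℂ) 1, ‖f z‖ ≤ 1 := by
    intro z hz
    refine Complex.norm_le_of_forall_mem_frontier_norm_le isBounded_ball hdc ?_ (hcl ▸ hz)
    intro w hw
    rw [hfr] at hw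
    exact le_of_eq (hb w (mem_sphere_zero_iff_norm.mp hw))
  have hge : ∀ z ∈ closedBall (0:ℂ) 1, 1 ≤ ‖f z‖ := by
    intro z hz
    have hinv : DiffContOnCl ℂ (fun w => (f w)⁻¹) (ball (0:ℂ) 1) := by
      refine ⟨hd.inv fun w hw => h0 w (ball_subset_closedBall hw), ?_⟩
      rw [hcl]; exact hc.inv₀ h0
    have : ‖(f z)⁻¹‖ ≤ 1 := by
      refine Complex.norm_le_of_forall_mem_frontier_norm_le isBounded_ball hinv ?_ (hcl ▸ hz)
      intro w hw
      rw [hfr] at hw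
      rw [norm_inv, hb w (mem_sphere_zero_iff_norm.mp hw)]
      norm_num
    rw [norm_inv] at this
    have hfz : f z ≠ 0 := h0 z hz
    rw [inv_le_one_iff₀] at this
    rcases this with h | h
    · exact absurd (le_antisymm h (norm_nonneg _)) (norm_ne_zero_iff.mpr hfz)
    · exact h
  have h0c : (0:ℂ) ∈ ball (0:ℂ) 1 := by simp
  have hmax : IsMaxOn (norm ∘ f) (ball (0:ℂ) 1) 0 := by
    intro w hw
    simp only [Function.comp_apply]
    calc ‖f w‖ ≤ 1 := hle w (ball_subset_closedBall hw)
    _ ≤ ‖f 0‖ := hge 0 (ball_subset_closedBall h0c)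
  have heq : EqOn f (Function.const ℂ (f 0)) (closedBall (0:ℂ) 1) := by
    rw [← hcl]
    exact Complex.eqOn_closure_of_isPreconnected_of_isMaxOn_norm
      (convex_ball (0:ℂ) 1).isPreconnected isOpen_ball hdc h0c hmax
  refine ⟨Complex.arg (f 0), fun z hz => ?_⟩
  rw [heq hz]
  have h1 : ‖f 0‖ = 1 :=
    le_antisymm (hle 0 (ball_subset_closedBall h0c)) (hge 0 (ball_subset_closedBall h0c))
  have := Complex.norm_mul_exp_arg_mul_I (f 0)
  rw [h1] at this
  simpa using this.symm

lemma fact_lemma : ∀ (n : ℕ) (f : ℂ → ℂ),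
    ContinuousOn f (closedBall (0 : ℂ) 1) →
    DifferentiableOn ℂ f (ball (0 : ℂ) 1) →
    (∀ z ∈ sphere (0:ℂ) 1, f z ≠ 0) →
    ∀ s : Finset ℂ, (↑s ⊆ ball (0:ℂ) 1) →
    (∀ z ∈ closedBall (0:ℂ) 1, f z = 0 → z ∈ s) →
    (∑ z ∈ s, ordN f z ≤ n) →
    ∃ (m : ℕ) (α : Fin m → ℂ) (g : ℂ → ℂ), (∀ j, ‖α j‖ < 1) ∧
      ContinuousOn g (closedBall (0:ℂ) 1) ∧ DifferentiableOn ℂ g (ball (0:ℂ) 1) ∧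
      (∀ z ∈ closedBall (0:ℂ) 1, g z ≠ 0) ∧ ∀ z : ℂ, f z = (∏ j, (z - α j)) * g z := by
  intro n
  induction n with
  | zero =>
    intro f hc hd hb s hs hzs hsum
    by_cases hnv : ∀ z ∈ closedBall (0:ℂ) 1, f z ≠ 0
    · exact ⟨0, ![], f, fun j => j.elim0, hc, hd, hnv, fun z => by simp⟩
    · exfalso
      push_neg at hnv
      obtain ⟨α, hαcb, hα0⟩ := hnv
      have hαs : α ∈ s := hzs α hαcb hα0
      have hαb : α ∈ ball (0:ℂ) 1 := hs hαs
      have hA : AnalyticOnNhd ℂ f (ball (0:ℂ) 1) := hd.analyticOnNhd isOpen_ball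
      have htop : analyticOrderAt f α ≠ ⊤ := fun h =>
        not_eventually_zero f hc hd hb hαb ((analyticOrderAt_eq_top).mp h)
      have h1 : 1 ≤ ordN f α := one_le_ordN (hA α hαb) htop hα0
      have h2 : ordN f α ≤ ∑ z ∈ s, ordN f z :=
        Finset.single_le_sum (fun z _ => Nat.zero_le _) hαs
      omega
  | succ n ih =>
    intro f hc hd hb s hs hzs hsum
    by_cases hnv : ∀ z ∈ closedBall (0:ℂ) 1, f z ≠ 0
    · exact ⟨0, ![], f, fun j => j.elim0, hc, hd, hnv, fun z => by simp⟩
    · push_neg at hnv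
      obtain ⟨α, hαcb, hα0⟩ := hnv
      have hαs : α ∈ s := hzs α hαcb hα0
      have hαb : α ∈ ball (0:ℂ) 1 := hs hαs
      set g := dslope f α with hg
      have hfg : ∀ w, f w = (w - α) * g w := by
        intro w
        have h := sub_smul_dslope f α w
        rw [hα0, sub_zero, smul_eq_mul] at h
        exact h.symm
      have hfe : f = fun w => (w - α) * g w := funext hfg
      have hgA : AnalyticOnNhd ℂ g (ball (0:ℂ) 1) := dslope_analyticOnNhd f hd hαb
      have hgc : ContinuousOn g (closedBall (0:ℂ) 1) := dslope_continuousOn f hc hd hαb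
      have hgd : DifferentiableOn ℂ g (ball (0:ℂ) 1) := hgA.differentiableOn
      have hgb : ∀ z ∈ sphere (0:ℂ) 1, g z ≠ 0 := by
        intro z hz h
        exact hb z hz (by rw [hfg z, h, mul_zero])
      have hzs' : ∀ z ∈ closedBall (0:ℂ) 1, g z = 0 → z ∈ s := by
        intro z hz h
        exact hzs z hz (by rw [hfg z, h, mul_zero])
      have hpoint : ∀ z ∈ s, ordN f z = ordN g z + (if z = α then 1 else 0) := by
        intro z hzmem
        have hzb : z ∈ ball (0:ℂ) 1 := hs hzmem
        have htop : analyticOrderAt g z ≠ ⊤ := by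
          intro h
          rw [analyticOrderAt_eq_top] at h
          apply not_eventually_zero f hc hd hb hzb
          filter_upwards [h] with w hw
          rw [hfg w, hw, mul_zero]
        rw [hfe]
        exact ordN_mul_sub (hgA z hzb) htop
      have hsum' : ∑ z ∈ s, ordN g z ≤ n := by
        have heq : ∑ z ∈ s, ordN f z = (∑ z ∈ s, ordN g z) + 1 := by
          rw [Finset.sum_congr rfl hpoint, Finset.sum_add_distrib,
            Finset.sum_ite_eq' s α fun _ => 1, if_pos hαs]
        omega
      obtain ⟨m, β, h, hβ, hhc, hhd, hh0, hhfact⟩ := ih g hgc hgd hgb s hs hzs' hsum'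
      refine ⟨m + 1, Fin.cons α β, h, ?_, hhc, hhd, hh0, ?_⟩
      · intro j
        refine Fin.cases ?_ ?_ j
        · exact mem_ball_zero_iff.mp hαb
        · exact hβ
      · intro z
        rw [hfg z, hhfact z]
        simp only [Fin.prod_univ_succ, Fin.cons_zero, Fin.cons_succ]
        ring


/-- Classification of holomorphic discs in ℂ with boundary on the unit circle:
a map continuous on the closed unit disc, holomorphic on the open disc, sending the boundary
circle into the unit circle, is a finite Blaschke product. -/
theorem stmt1 (f : ℂ → ℂ)
    (hc : ContinuousOn f (closedBall (0 : ℂ) 1))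
    (hd : DifferentiableOn ℂ f (ball (0 : ℂ) 1))
    (hb : ∀ z : ℂ, ‖z‖ = 1 → ‖f z‖ = 1) :
    ∃ (θ : ℝ) (m : ℕ) (α : Fin m → ℂ), (∀ j, ‖α j‖ < 1) ∧
      ∀ z ∈ closedBall (0 : ℂ) 1,
        f z = Complex.exp (θ * I) * ∏ j, (z - α j) / (1 - (starRingEnd ℂ) (α j) * z) := by
  have hb' : ∀ z ∈ sphere (0:ℂ) 1, f z ≠ 0 := by
    intro z hz h
    have := hb z (mem_sphere_zero_iff_norm.mp hz)
    rw [h] at this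
    simp at this
  have hfin := zeros_finite f hc hd hb'
  set s := hfin.toFinset with hsdef
  have hs : ↑s ⊆ ball (0:ℂ) 1 := by
    intro z hz
    rw [hsdef, Set.Finite.coe_toFinset] at hz
    rcases lt_or_eq_of_le (mem_closedBall_zero_iff.mp hz.1) with hlt | heq
    · exact mem_ball_zero_iff.mpr hlt
    · exact absurd hz.2 (hb' z (mem_sphere_zero_iff_norm.mpr heq))
  have hzs : ∀ z ∈ closedBall (0:ℂ) 1, f z = 0 → z ∈ s := by
    intro z hz h
    rw [hsdef, Set.Finite.mem_toFinset]
    exact ⟨hz, h⟩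
  obtain ⟨m, α, g, hα, hgc, hgd, hg0, hfact⟩ :=
    fact_lemma (∑ z ∈ s, ordN f z) f hc hd hb' s hs hzs le_rfl
  set P : ℂ → ℂ := fun z => ∏ j, (1 - (starRingEnd ℂ) (α j) * z) with hP
  have hPne : ∀ z ∈ closedBall (0:ℂ) 1, ∀ j, (1 : ℂ) - (starRingEnd ℂ) (α j) * z ≠ 0 := by
    intro z hz j
    have h1 : ‖(starRingEnd ℂ) (α j) * z‖ < 1 := by
      rw [norm_mul, RCLike.norm_conj]
      calc ‖α j‖ * ‖z‖ ≤ ‖α j‖ := by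
            exact mul_le_of_le_one_right (norm_nonneg _) (mem_closedBall_zero_iff.mp hz)
      _ < 1 := hα j
    intro h
    rw [sub_eq_zero] at h
    rw [← h] at h1
    simp at h1
  have hPz : ∀ z ∈ closedBall (0:ℂ) 1, P z ≠ 0 := fun z hz =>
    Finset.prod_ne_zero_iff.mpr fun j _ => hPne z hz j
  set h : ℂ → ℂ := fun z => g z * P z with hh
  have hhc : ContinuousOn h (closedBall (0:ℂ) 1) := by
    apply hgc.mul
    apply Continuous.continuousOn
    exact continuous_finset_prod _ fun j _ => continuous_const.sub (continuous_const.mul continuous_id)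
  have hhd : DifferentiableOn ℂ h (ball (0:ℂ) 1) := by
    apply hgd.mul
    apply Differentiable.differentiableOn
    exact Differentiable.fun_finsetProd fun j _ =>
      (differentiable_const _).sub ((differentiable_const _).mul differentiable_id)
  have hh0 : ∀ z ∈ closedBall (0:ℂ) 1, h z ≠ 0 := fun z hz =>
    mul_ne_zero (hg0 z hz) (hPz z hz)
  have hhb : ∀ z : ℂ, ‖z‖ = 1 → ‖h z‖ = 1 := by
    intro z hz1
    have hz2 : (starRingEnd ℂ) z * z = 1 := by
      rw [mul_comm, Complex.mul_conj]
      norm_cast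
      rw [Complex.normSq_eq_norm_sq, hz1]
      norm_num
    have key : ∀ j : Fin m, ‖(1:ℂ) - (starRingEnd ℂ) (α j) * z‖ = ‖z - α j‖ := by
      intro j
      have he : (1:ℂ) - (starRingEnd ℂ) (α j) * z = (starRingEnd ℂ) (z - α j) * z := by
        rw [map_sub]
        linear_combination -hz2
      rw [he, norm_mul, RCLike.norm_conj, hz1, mul_one]
    have hf1 : ‖f z‖ = 1 := hb z hz1
    rw [hfact z, norm_mul, norm_prod] at hf1
    rw [hh, hP]
    simp only [norm_mul, norm_prod]
    rw [Finset.prod_congr rfl fun j _ => key j]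
    rw [mul_comm]
    exact hf1
  obtain ⟨θ, hθ⟩ := const_of_ne_zero h hhc hhd hhb hh0
  refine ⟨θ, m, α, hα, fun z hz => ?_⟩
  have hgz : g z = Complex.exp (θ * I) / P z := by
    rw [eq_div_iff (hPz z hz)]
    exact hθ z hz
  rw [hfact z, hgz]
  rw [Finset.prod_div_distrib]
  rw [hP]
  ring
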